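/- Let K ≥ 2, α ∈ (0,1) and q ∈ Δ_K. Then (1/α)(Σ_{i=1}^K q_i^α − 1) ≥ (1 − 2^{α−1})·q_*^α/α, and consequently (1/α)(Σ_{i=1}^K q_i^α − 1) ≥ ((1−α)/(4α))·q_*^α. -/
import Mathlib


open Finset

/-- `x_* = min(maxᵢ xᵢ, 1 − maxᵢ xᵢ)`. -/
noncomputable def vecStar {K : ℕ} (x : Fin K → ℝ) : ℝ :=
  min (⨆ i, x i) (1 - ⨆ i, x i)

lemma my_rpow_add_le {x y p : ℝ} (hx : 0 ≤ x) (hy : 0 ≤ y) (hp : 0 ≤ p) (hp1 : p ≤ 1) :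
    (x + y) ^ p ≤ x ^ p + y ^ p := by
  have h := NNReal.rpow_add_le_add_rpow ⟨x, hx⟩ ⟨y, hy⟩ hp hp1
  have h' := NNReal.coe_le_coe.2 h
  push_cast [NNReal.coe_rpow] at h'
  exact h'

lemma my_sum_rpow {ι : Type*} (S : Finset ι) (f : ι → ℝ) (hf : ∀ i, 0 ≤ f i)
    {p : ℝ} (hp : 0 < p) (hp1 : p ≤ 1) :
    (∑ i ∈ S, f i) ^ p ≤ ∑ i ∈ S, f i ^ p := by
  induction S using Finset.cons_induction with
  | empty => simp [Real.zero_rpow hp.ne']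
  | cons a s ha ih =>
      rw [Finset.sum_cons, Finset.sum_cons]
      calc (f a + ∑ i ∈ s, f i) ^ p ≤ f a ^ p + (∑ i ∈ s, f i) ^ p :=
            my_rpow_add_le (hf a) (Finset.sum_nonneg fun i _ => hf i) hp.le hp1
        _ ≤ f a ^ p + ∑ i ∈ s, f i ^ p := by linarith

/-- core scalar inequality: for `0 ≤ m ≤ 1/2`, `0 < α < 1`,
`(1 - 2^(α-1)) m^α ≤ m^α + (1-m)^α - 1`. -/
lemma core_ineq {m α : ℝ} (hm0 : 0 ≤ m) (hm2 : m ≤ 1/2) (hα0 : 0 < α) (hα1 : α < 1) :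
    (1 - (2:ℝ) ^ (α - 1)) * m ^ α ≤ m ^ α + (1 - m) ^ α - 1 := by
  rcases eq_or_lt_of_le hm0 with hm | hm
  · simp [← hm, Real.zero_rpow hα0.ne']
  -- chord inequality : 1 - 2*(1 - 2^(-α))*m ≤ (1-m)^α
  have h2inv : ((2:ℝ)⁻¹) ^ α = (2:ℝ) ^ (-α) := by
    rw [Real.inv_rpow (by norm_num), ← Real.rpow_neg (by norm_num)]
  have hconc := (Real.concaveOn_rpow hα0.le hα1.le).2
    (Set.mem_Ici.2 (by norm_num : (0:ℝ) ≤ 1)) (Set.mem_Ici.2 (by norm_num : (0:ℝ) ≤ 2⁻¹))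
    (by linarith : (0:ℝ) ≤ 1 - 2*m) (by linarith : (0:ℝ) ≤ 2*m) (by ring)
  have h1 : ((1:ℝ)) ^ α = 1 := Real.one_rpow α
  have hx : (1 - 2*m) • (1:ℝ) + (2*m) • (2⁻¹:ℝ) = 1 - m := by
    simp [smul_eq_mul]; ring
  rw [hx] at hconc
  simp only [smul_eq_mul, h1, h2inv] at hconc
  -- hconc : (1 - 2m)*1 + 2m * 2^(-α) ≤ (1-m)^α
  have hchord : 1 - 2*(1 - (2:ℝ)^(-α))*m ≤ (1-m)^α := by nlinarith [hconc]
  -- m = m^(1-α) * m^α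
  have hsplit : m = m ^ (1-α) * m ^ α := by
    rw [← Real.rpow_add hm]; norm_num
  -- m^(1-α) ≤ 2^(α-1)
  have h2a1 : ((2:ℝ)⁻¹) ^ (1-α) = (2:ℝ) ^ (α-1) := by
    rw [Real.inv_rpow (by norm_num), ← Real.rpow_neg (by norm_num), neg_sub]
  have hm1a : m ^ (1-α) ≤ (2:ℝ) ^ (α-1) := by
    rw [← h2a1]
    exact Real.rpow_le_rpow hm0 (by linarith) (by linarith)
  -- constants
  have h2negα : (0:ℝ) < (2:ℝ)^(-α) := Real.rpow_pos_of_pos (by norm_num) _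
  have h2negα1 : (2:ℝ)^(-α) ≤ 1 := Real.rpow_le_one_of_one_le_of_nonpos (by norm_num) (by linarith)
  have h2α : (2:ℝ)^α = 2 * (2:ℝ)^(α-1) := by
    rw [← Real.rpow_one_add' (by norm_num) (by intro h; linarith)]
    norm_num
  have h2mul : (2:ℝ)^α * (2:ℝ)^(-α) = 1 := by
    rw [← Real.rpow_add (by norm_num)]; norm_num
  have h2α1le : (2:ℝ)^(α-1) ≤ 1 := Real.rpow_le_one_of_one_le_of_nonpos (by norm_num) (by linarith)
  have hmα : (0:ℝ) < m ^ α := Real.rpow_pos_of_pos hm _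
  -- 2*(1-2^(-α)) * m ≤ (2^α - 1) * m^α ≤ 2^(α-1) * m^α
  have key : 2*(1 - (2:ℝ)^(-α))*m ≤ (2:ℝ)^(α-1) * m^α := by
    have h1 : 2*(1 - (2:ℝ)^(-α))*m = (2*(1 - (2:ℝ)^(-α)) * m^(1-α)) * m^α := by
      conv_rhs => rw [mul_assoc, ← hsplit]
    have h2 : 2*(1 - (2:ℝ)^(-α)) * m^(1-α) ≤ 2*(1 - (2:ℝ)^(-α)) * (2:ℝ)^(α-1) := by
      have : (0:ℝ) ≤ 2*(1 - (2:ℝ)^(-α)) := by linarith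
      nlinarith [hm1a]
    have h3 : 2*(1 - (2:ℝ)^(-α)) * (2:ℝ)^(α-1) = (2:ℝ)^α - 1 := by
      rw [h2α] at h2mul ⊢; nlinarith [h2mul]
    have h4 : (2:ℝ)^α - 1 ≤ (2:ℝ)^(α-1) := by rw [h2α]; linarith
    rw [h1]
    calc (2*(1 - (2:ℝ)^(-α)) * m^(1-α)) * m^α
        ≤ (2*(1 - (2:ℝ)^(-α)) * (2:ℝ)^(α-1)) * m^α := by nlinarith [h2]
      _ = ((2:ℝ)^α - 1) * m^α := by rw [h3]
      _ ≤ (2:ℝ)^(α-1) * m^α := by nlinarith [h4]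
  nlinarith [hchord, key]

/-- **Lemma 14.** For `q ∈ Δ_K`, the negative α-Tsallis entropy satisfies
`(1/α)(Σᵢ qᵢ^α − 1) ≥ (1 − 2^{α−1})·q_*^α/α`, and consequently
`(1/α)(Σᵢ qᵢ^α − 1) ≥ ((1−α)/(4α))·q_*^α`. -/
theorem stmt6 {K : ℕ} (hK : 2 ≤ K) (α : ℝ) (hα : α ∈ Set.Ioo (0:ℝ) 1)
    (q : Fin K → ℝ) (hq : (∀ i, 0 ≤ q i) ∧ ∑ i, q i = 1) :
    (1 - (2:ℝ) ^ (α - 1)) * (vecStar q) ^ α / α ≤ (1 / α) * ((∑ i, q i ^ α) - 1) ∧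
    ((1 - α) / (4 * α)) * (vecStar q) ^ α ≤ (1 / α) * ((∑ i, q i ^ α) - 1) := by
  obtain ⟨hq0, hq1⟩ := hq
  obtain ⟨hα0, hα1⟩ := hα
  have hKpos : 0 < K := by omega
  haveI : NeZero K := ⟨by omega⟩
  obtain ⟨j, hj⟩ := Finite.exists_max q
  have hMsup : (⨆ i, q i) = q j :=
    le_antisymm (ciSup_le hj) (le_ciSup (Set.Finite.bddAbove (Set.finite_range q)) j)
  set M := q j with hMdef
  have hM0 : 0 ≤ M := hq0 j
  have hM1 : M ≤ 1 := by
    rw [← hq1]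
    exact Finset.single_le_sum (fun i _ => hq0 i) (Finset.mem_univ j)
  have hrest : ∑ i ∈ Finset.univ.erase j, q i = 1 - M := by
    rw [Finset.sum_erase_eq_sub (Finset.mem_univ j), hq1]
  -- key sum bound
  have hsum : M ^ α + (1 - M) ^ α ≤ ∑ i, q i ^ α := by
    have h1 : ∑ i, q i ^ α = M ^ α + ∑ i ∈ Finset.univ.erase j, q i ^ α := by
      rw [← Finset.add_sum_erase _ _ (Finset.mem_univ j)]
    have h2 : (1 - M) ^ α ≤ ∑ i ∈ Finset.univ.erase j, q i ^ α := by
      rw [← hrest]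
      exact my_sum_rpow _ q hq0 hα0 hα1.le
    linarith
  -- vecStar q = min M (1 - M)
  have hvs : vecStar q = min M (1 - M) := by rw [vecStar, hMsup]
  set m := min M (1 - M) with hmdef
  have hm0 : 0 ≤ m := le_min hM0 (by linarith)
  have hm2 : m ≤ 1/2 := by
    have h1 : m ≤ M := min_le_left _ _
    have h2 : m ≤ 1 - M := min_le_right _ _
    linarith
  have hswap : m ^ α + (1 - m) ^ α = M ^ α + (1 - M) ^ α := by
    rcases le_total M (1 - M) with h | h
    · rw [hmdef, min_eq_left h]
    · rw [hmdef, min_eq_right h]; ring_nf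
  have hcore := core_ineq hm0 hm2 hα0 hα1
  have hmain : (1 - (2:ℝ) ^ (α - 1)) * m ^ α ≤ (∑ i, q i ^ α) - 1 := by linarith
  have hmαnn : 0 ≤ m ^ α := Real.rpow_nonneg hm0 α
  -- constant comparison : (1-α)/4 ≤ 1 - 2^(α-1)
  have hbern : (2:ℝ) ^ α ≤ 1 + α := by
    have := rpow_one_add_le_one_add_mul_self (by norm_num : (-1:ℝ) ≤ 1) hα0.le hα1.le
    norm_num at this
    linarith
  have h2α : (2:ℝ)^α = 2 * (2:ℝ)^(α-1) := by
    rw [← Real.rpow_one_add' (by norm_num) (by intro h; linarith)]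
    norm_num
  have hconst : (1 - α)/4 ≤ 1 - (2:ℝ)^(α-1) := by
    rw [h2α] at hbern
    linarith
  have hdiv : ∀ X : ℝ, X ≤ (∑ i, q i ^ α) - 1 → X / α ≤ 1 / α * ((∑ i, q i ^ α) - 1) := by
    intro X hX
    rw [div_le_iff₀ hα0]
    have heq : 1 / α * ((∑ i, q i ^ α) - 1) * α = (∑ i, q i ^ α) - 1 := by field_simp
    linarith
  constructor
  · rw [hvs]
    exact hdiv _ hmain
  · rw [hvs]
    have h1 : ((1 - α) / (4 * α)) * m ^ α ≤ (1 - (2:ℝ)^(α-1)) * m ^ α / α := by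
      rw [div_mul_eq_mul_div, div_le_div_iff₀ (by linarith : (0:ℝ) < 4*α) hα0]
      nlinarith [mul_le_mul_of_nonneg_right hconst (mul_nonneg hα0.le hmαnn)]
    exact le_trans h1 (hdiv _ hmain)
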